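/- Let A : Matrix (Fin n) (Fin n) ℝ with fill relation F. If i < j and F i j, then j is an ancestor of i in the elimination tree: there exist m ≥ 1 and a finite sequence t_0 = i, t_1, …, t_m = j such that for each l < m the set {u : t_l < u ∧ F t_l u} is nonempty and t_{l+1} = parent t_l. (In particular, the filled graph has no cross edges: every fill edge joins a vertex to one of its ancestors in the elimination tree.) -/

import Mathlib

/-- The undirected graph `G(A)` of a square real matrix `A`: `i` is adjacent to `j` iff
`i ≠ j` and (`A i j ≠ 0` or `A j i ≠ 0`). -/
def graphOf {n : ℕ} (A : Matrix (Fin n) (Fin n) ℝ) : SimpleGraph (Fin n) where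
  Adj i j := i ≠ j ∧ (A i j ≠ 0 ∨ A j i ≠ 0)
  symm := by
    constructor
    intro i j h
    exact ⟨h.1.symm, h.2.symm⟩
  loopless := by
    constructor
    intro i h
    exact h.1 rfl

/-- The fill relation of `A`: `fill A i j` iff `i ≠ j` and there is a walk from `i` to
`j` in `G(A)` all of whose interior vertices `u` satisfy `u < i` and `u < j`. -/
def fill {n : ℕ} (A : Matrix (Fin n) (Fin n) ℝ) (i j : Fin n) : Prop :=
  i ≠ j ∧ ∃ w : (graphOf A).Walk i j, ∀ u ∈ w.support.tail.dropLast, u < i ∧ u < j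

private lemma fill_step {n : ℕ} (A : Matrix (Fin n) (Fin n) ℝ) (i p j : Fin n)
    (hip : i < p) (hijlt : i < j) (hpj : p ≠ j)
    (h1 : fill A i p) (h2 : fill A i j) : fill A p j := by
  obtain ⟨-, w1, hw1⟩ := h1
  obtain ⟨-, w2, hw2⟩ := h2
  refine ⟨hpj, w1.reverse.append w2, ?_⟩
  intro u hu
  have htail2 : w2.support.tail ≠ [] := by
    intro h
    have := w2.end_mem_support
    rw [w2.support_eq_cons, h] at this
    simp at this
    exact absurd this.symm (ne_of_lt hijlt)
  have htail1 : w1.support.tail ≠ [] := by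
    intro h
    have := w1.end_mem_support
    rw [w1.support_eq_cons, h] at this
    simp at this
    exact absurd this.symm (ne_of_lt hip)
  rw [SimpleGraph.Walk.support_append, SimpleGraph.Walk.support_reverse,
    List.tail_append_of_ne_nil (by simp [w1.support_ne_nil]),
    List.tail_reverse, List.dropLast_append_of_ne_nil htail2] at hu
  rcases List.mem_append.mp hu with h | h
  · rw [List.mem_reverse] at h
    have : u ≤ i := by
      rw [w1.support_eq_cons, List.dropLast_cons_of_ne_nil htail1] at h
      rcases List.mem_cons.mp h with h | h
      · exact le_of_eq h
      · exact le_of_lt (hw1 u h).1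
    exact ⟨lt_of_le_of_lt this hip, lt_of_le_of_lt this hijlt⟩
  · obtain ⟨h1, h2⟩ := hw2 u h
    exact ⟨lt_trans h1 hip, h2⟩

private lemma fill_edge_ancestor_aux {n : ℕ} (A : Matrix (Fin n) (Fin n) ℝ) :
    ∀ k : ℕ, ∀ i j : Fin n, j.val - i.val ≤ k → i < j → fill A i j →
    ∃ m : ℕ, 1 ≤ m ∧ ∃ t : ℕ → Fin n, t 0 = i ∧ t m = j ∧
      ∀ l < m, IsLeast {u : Fin n | t l < u ∧ fill A (t l) u} (t (l + 1)) := by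
  intro k
  induction k using Nat.strong_induction_on with
  | _ k ih =>
    intro i j hk hij hF
    have hS : ({u : Fin n | i < u ∧ fill A i u}).Nonempty := ⟨j, hij, hF⟩
    obtain ⟨p, hpS, hpmin⟩ := (wellFounded_lt (α := Fin n)).has_min _ hS
    have hleast : IsLeast {u : Fin n | i < u ∧ fill A i u} p :=
      ⟨hpS, fun x hx => not_lt.mp (hpmin x hx)⟩
    have hpj : p ≤ j := hleast.2 ⟨hij, hF⟩
    rcases eq_or_lt_of_le hpj with heq | hlt
    · refine ⟨1, le_refl 1, fun l => if l = 0 then i else j, by simp, by simp, ?_⟩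
      intro l hl
      interval_cases l
      simpa using heq ▸ hleast
    · have hFpj : fill A p j := fill_step A i p j hpS.1 hij (ne_of_lt hlt) hpS.2 hF
      have hk'' : j.val - p.val < k := by
        have h1 : i.val < p.val := hpS.1
        have h2 : i.val < j.val := hij
        omega
      obtain ⟨m, hm, t, ht0, htm, hts⟩ :=
        ih (j.val - p.val) hk'' p j (le_refl _) hlt hFpj
      refine ⟨m + 1, by omega, fun l => if l = 0 then i else t (l - 1), by simp, ?_, ?_⟩
      · simp [htm, Nat.succ_ne_zero]
      · intro l hl
        match l with
        | 0 => simpa [ht0] using hleast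
        | Nat.succ l' =>
          have := hts l' (by omega)
          simpa using this

/-- if `i < j` and `fill A i j`, then `j` is an ancestor of `i` in the
elimination tree: there is an `m ≥ 1` and a sequence `t 0 = i`, …, `t m = j` where each
`t (l+1)` is the elimination-tree parent of `t l`, i.e. the least element of the
(nonempty) set `{u | t l < u ∧ fill A (t l) u}`. -/
theorem fill_edge_ancestor {n : ℕ} (A : Matrix (Fin n) (Fin n) ℝ) (i j : Fin n)
    (hij : i < j) (hF : fill A i j) :
    ∃ m : ℕ, 1 ≤ m ∧ ∃ t : ℕ → Fin n, t 0 = i ∧ t m = j ∧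
      ∀ l < m, IsLeast {u : Fin n | t l < u ∧ fill A (t l) u} (t (l + 1)) := by
  exact fill_edge_ancestor_aux A (j.val - i.val) i j (le_refl _) hij hF
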